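/- arXiv:1404.3149 — 5 statements merged into one kernel-verified Lean document; each statement's English description precedes it below -/
import Mathlib

section
/- Let n ≥ 1 and let g : ℂ^{n+1} → ℂ^{n+1} be the fold map g(x_1, …, x_n, x_{n+1}) = (x_1, …, x_n, x_{n+1}²). A map η : ℂ^{n+1} → ℂ^{n+1}, analytic on a neighbourhood of 0, is liftable over g if and only if its last component vanishes identically on the hyperplane {X_{n+1} = 0} near 0, i.e. η_{n+1}(X_1, …, X_n, 0) = 0 for all (X_1,…,X_n) in a neighbourhood of 0 in ℂ^n. -/
open Filter Topology
open scoped NNReal ENNReal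

noncomputable section

namespace FoldAux

lemma insertNth_update {m : ℕ} {α : Type*} [DecidableEq (Fin m)] [DecidableEq (Fin (m+1))]
    (p : Fin (m + 1)) (x : α) (f : Fin m → α) (t : Fin m) (c : α) :
    p.insertNth x (Function.update f t c)
      = Function.update (β := fun _ : Fin (m+1) => α) (p.insertNth x f) (p.succAbove t) c := by
  ext j
  rcases eq_or_ne j p with rfl | hj
  · rw [Function.update_of_ne (Fin.succAbove_ne j t).symm]
    simp
  · obtain ⟨k, rfl⟩ := Fin.exists_succAbove_eq hj
    simp [Fin.insertNth_apply_succAbove, Function.update_apply, Fin.succAbove_right_inj]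

variable {n : ℕ}

/-- The last basis vector. -/
def ev (n : ℕ) : Fin (n+1) → ℂ := Pi.single (Fin.last n) 1

/-- Projection onto the hyperplane `{x_last = 0}`. -/
def PP (n : ℕ) : (Fin (n+1) → ℂ) →L[ℂ] (Fin (n+1) → ℂ) :=
  ContinuousLinearMap.id ℂ _ -
    (ContinuousLinearMap.proj (Fin.last n)).smulRight (ev n)

lemma PP_apply (x : Fin (n+1) → ℂ) :
    PP n x = Function.update x (Fin.last n) 0 := by
  funext j
  rcases eq_or_ne j (Fin.last n) with rfl | hj
  · simp [PP, ev, Pi.single_apply, Function.update_apply]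
  · simp [PP, ev, Pi.single_apply, Function.update_apply, hj]

lemma PP_last (x : Fin (n+1) → ℂ) : PP n x (Fin.last n) = 0 := by
  rw [PP_apply]; simp

lemma sub_PP (x : Fin (n+1) → ℂ) : x (Fin.last n) • ev n = x - PP n x := by
  simp [PP]

lemma norm_PP_le (x : Fin (n+1) → ℂ) : ‖PP n x‖ ≤ ‖x‖ := by
  rw [PP_apply]
  refine (pi_norm_le_iff_of_nonneg (norm_nonneg x)).2 fun j => ?_
  rcases eq_or_ne j (Fin.last n) with rfl | hj
  · simp
  · rw [Function.update_of_ne hj]; exact norm_le_pi_norm x j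

lemma norm_ev (n : ℕ) : ‖ev n‖ = 1 := by
  rw [ev, Pi.norm_single]; exact norm_one


/-- The building block of the shifted series: plug `x` into the first `i` slots,
`ev n` into slot `i`, and project the remaining slots. -/
def MM (p : FormalMultilinearSeries ℂ (Fin (n+1) → ℂ) ℂ) (m : ℕ) (i : Fin (m+1)) :
    MultilinearMap ℂ (fun _ : Fin m => (Fin (n+1) → ℂ)) ℂ where
  toFun v := p (m+1) (i.insertNth (ev n) fun k : Fin m => if (k:ℕ) < (i:ℕ) then v k else PP n (v k))
  map_update_add' {dec} v t a b := by
    have W : ∀ (c : Fin (n+1) → ℂ),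
        (fun k : Fin m => if (k:ℕ) < (i:ℕ) then (Function.update v t c) k
          else PP n ((Function.update v t c) k))
        = Function.update (fun k : Fin m => if (k:ℕ) < (i:ℕ) then v k else PP n (v k)) t
            (if (t:ℕ) < (i:ℕ) then c else PP n c) := by
      intro c; funext k
      rcases eq_or_ne k t with rfl | hk
      · simp
      · simp [Function.update_of_ne hk]
    rw [W, W, W, insertNth_update, insertNth_update, insertNth_update]
    split_ifs with h
    · exact (p (m+1)).map_update_add _ _ _ _
    · rw [map_add]; exact (p (m+1)).map_update_add _ _ _ _
  map_update_smul' {dec} v t c a := by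
    have W : ∀ (c : Fin (n+1) → ℂ),
        (fun k : Fin m => if (k:ℕ) < (i:ℕ) then (Function.update v t c) k
          else PP n ((Function.update v t c) k))
        = Function.update (fun k : Fin m => if (k:ℕ) < (i:ℕ) then v k else PP n (v k)) t
            (if (t:ℕ) < (i:ℕ) then c else PP n c) := by
      intro c; funext k
      rcases eq_or_ne k t with rfl | hk
      · simp
      · simp [Function.update_of_ne hk]
    rw [W, W, insertNth_update, insertNth_update]
    split_ifs with h
    · exact (p (m+1)).map_update_smul _ _ _ _
    · rw [map_smul]; exact (p (m+1)).map_update_smul _ _ _ _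

lemma MM_bound (p : FormalMultilinearSeries ℂ (Fin (n+1) → ℂ) ℂ) (m : ℕ) (i : Fin (m+1))
    (v : Fin m → (Fin (n+1) → ℂ)) :
    ‖MM p m i v‖ ≤ ‖p (m+1)‖ * ∏ k, ‖v k‖ := by
  set A : Fin (m+1) → (Fin (n+1) → ℂ) :=
    i.insertNth (ev n) (fun k : Fin m => if (k:ℕ) < (i:ℕ) then v k else PP n (v k)) with hA
  have hMM : MM p m i v = p (m+1) A := rfl
  rw [hMM]
  refine ((p (m+1)).le_opNorm _).trans ?_
  refine mul_le_mul_of_nonneg_left ?_ (norm_nonneg _)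
  rw [Fin.prod_univ_succAbove (fun j => ‖A j‖) i]
  have hAi : A i = ev n := Fin.insertNth_apply_same _ _ _
  have h1 : ∀ k : Fin m, ‖A (i.succAbove k)‖ ≤ ‖v k‖ := by
    intro k
    rw [hA, Fin.insertNth_apply_succAbove]
    split_ifs with h
    · exact le_rfl
    · exact norm_PP_le _
  calc ‖A i‖ * ∏ k, ‖A (i.succAbove k)‖
      ≤ 1 * ∏ k, ‖v k‖ := by
        refine mul_le_mul (le_of_eq (by rw [hAi, norm_ev])) ?_ ?_ zero_le_one
        · exact Finset.prod_le_prod (fun k _ => norm_nonneg _) (fun k _ => h1 k)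
        · exact Finset.prod_nonneg fun k _ => norm_nonneg _
    _ = ∏ k, ‖v k‖ := one_mul _

/-- The shifted series. -/
def QQ (p : FormalMultilinearSeries ℂ (Fin (n+1) → ℂ) ℂ) :
    FormalMultilinearSeries ℂ (Fin (n+1) → ℂ) ℂ := fun m =>
  ∑ i : Fin (m+1), (MM p m i).mkContinuous ‖p (m+1)‖ (MM_bound p m i)

lemma QQ_norm (p : FormalMultilinearSeries ℂ (Fin (n+1) → ℂ) ℂ) (m : ℕ) :
    ‖QQ p m‖ ≤ (m+1) * ‖p (m+1)‖ := by
  refine (norm_sum_le _ _).trans ?_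
  calc ∑ i : Fin (m+1), ‖(MM p m i).mkContinuous ‖p (m+1)‖ (MM_bound p m i)‖
      ≤ ∑ _i : Fin (m+1), ‖p (m+1)‖ :=
        Finset.sum_le_sum fun i _ =>
          (MM p m i).mkContinuous_norm_le (norm_nonneg _) (MM_bound p m i)
    _ = (m+1) * ‖p (m+1)‖ := by
        simp [Finset.sum_const, nsmul_eq_mul]


lemma QQ_diag (p : FormalMultilinearSeries ℂ (Fin (n+1) → ℂ) ℂ) (m : ℕ)
    (x : Fin (n+1) → ℂ) :
    x (Fin.last n) * QQ p m (fun _ => x)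
      = p (m+1) (fun _ => x) - p (m+1) (fun _ => PP n x) := by
  set u : Fin (n+1) → ℂ := PP n x with hu
  set z : ℂ := x (Fin.last n) with hz
  set S : ℕ → Fin (m+1) → (Fin (n+1) → ℂ) :=
    fun t j => if (j:ℕ) < t then x else u with hS
  -- the vector with e in slot i
  set V : Fin (m+1) → Fin (m+1) → (Fin (n+1) → ℂ) :=
    fun i => i.insertNth (ev n) (fun k : Fin m => if (k:ℕ) < (i:ℕ) then x else u) with hV
  have hVi : ∀ i, V i i = ev n := fun i => Fin.insertNth_apply_same _ _ _
  have hVform : ∀ (i j : Fin (m+1)),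
      V i j = if (j:ℕ) < (i:ℕ) then x else if j = i then ev n else u := by
    intro i j
    rcases eq_or_ne j i with rfl | hj
    · simp [hVi]
    · obtain ⟨k, rfl⟩ := Fin.exists_succAbove_eq hj
      rw [hV]
      simp only [Fin.insertNth_apply_succAbove]
      rcases lt_or_ge (Fin.castSucc k) i with hk | hk
      · have hs : i.succAbove k = k.castSucc := Fin.succAbove_of_castSucc_lt _ _ hk
        have hv : ((i.succAbove k : Fin (m+1)) : ℕ) = (k : ℕ) := by rw [hs]; rfl
        have hk' : (k : ℕ) < (i : ℕ) := hk
        simp [hv, hk']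
      · have hs : i.succAbove k = k.succ := Fin.succAbove_of_le_castSucc _ _ hk
        have hv : ((i.succAbove k : Fin (m+1)) : ℕ) = (k : ℕ) + 1 := by
          rw [hs]; rfl
        have hk' : (i : ℕ) ≤ (k : ℕ) := hk
        have h1 : ¬ ((k : ℕ) < (i : ℕ)) := not_lt.2 hk'
        have h2 : ¬ (((i.succAbove k : Fin (m+1)) : ℕ) < (i : ℕ)) := by omega
        have h3 : (i.succAbove k : Fin (m+1)) ≠ i := hj
        simp [h1, h2, h3]
  have key : ∀ i : Fin (m+1),
      z * p (m+1) (V i) = p (m+1) (S ((i:ℕ)+1)) - p (m+1) (S (i:ℕ)) := by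
    intro i
    have e1 : Function.update (V i) i (ev n) = V i := by
      conv_lhs => rw [← hVi i]
      exact Function.update_eq_self _ _
    have e2 : z * p (m+1) (V i) = p (m+1) (Function.update (V i) i (z • ev n)) := by
      rw [(p (m+1)).map_update_smul, e1, smul_eq_mul]
    have e3 : z • ev n = x - u := by rw [hz, hu]; exact sub_PP x
    have e4 : Function.update (V i) i x = S ((i:ℕ)+1) := by
      funext j
      rcases eq_or_ne j i with rfl | hj
      · simp [hS]
      · have hji : (j:ℕ) ≠ (i:ℕ) := fun hc => hj (Fin.val_injective hc)
        rw [Function.update_of_ne hj, hVform i j, hS]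
        simp only
        split_ifs with h1 h2 h3 <;> first | rfl | omega | exact absurd ‹j = i› hj
    have e5 : Function.update (V i) i u = S (i:ℕ) := by
      funext j
      rcases eq_or_ne j i with rfl | hj
      · rw [Function.update_self, hS]
        simp
      · have hji : (j:ℕ) ≠ (i:ℕ) := fun hc => hj (Fin.val_injective hc)
        rw [Function.update_of_ne hj, hVform i j, hS]
        simp only
        split_ifs with h1 h2 h3 <;> first | rfl | omega | exact absurd ‹j = i› hj
    rw [e2, e3, (p (m+1)).map_update_sub, e4, e5]
  -- now sum the telescoping identity
  have hdiag : QQ p m (fun _ => x) = ∑ i : Fin (m+1), p (m+1) (V i) := by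
    rw [QQ, ContinuousMultilinearMap.sum_apply]
    refine Finset.sum_congr rfl fun i _ => ?_
    rfl
  rw [hdiag, Finset.mul_sum]
  calc ∑ i : Fin (m+1), z * p (m+1) (V i)
      = ∑ i : Fin (m+1), (p (m+1) (S ((i:ℕ)+1)) - p (m+1) (S (i:ℕ))) :=
        Finset.sum_congr rfl fun i _ => key i
    _ = ∑ t ∈ Finset.range (m+1), (p (m+1) (S (t+1)) - p (m+1) (S t)) :=
        Fin.sum_univ_eq_sum_range (fun t => p (m+1) (S (t+1)) - p (m+1) (S t)) (m+1)
    _ = p (m+1) (S (m+1)) - p (m+1) (S 0) :=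
        Finset.sum_range_sub (fun t => p (m+1) (S t)) (m+1)
    _ = p (m+1) (fun _ => x) - p (m+1) (fun _ => PP n x) := by
        have h1 : S (m+1) = fun _ => x := by
          funext j; rw [hS]; simp [j.isLt]
        have h2 : S 0 = fun _ => u := by
          funext j; rw [hS]; simp
        rw [h1, h2, hu]


theorem divide (n : ℕ) (F : (Fin (n+1) → ℂ) → ℂ) (hF : AnalyticAt ℂ F 0)
    (h0 : ∀ᶠ x in 𝓝 (0 : Fin (n+1) → ℂ), x (Fin.last n) = 0 → F x = 0) :
    ∃ a : (Fin (n+1) → ℂ) → ℂ, (∀ᶠ x in 𝓝 0, AnalyticAt ℂ a x) ∧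
      ∀ᶠ x in 𝓝 (0 : Fin (n+1) → ℂ), F x = x (Fin.last n) * a x := by
  obtain ⟨p, r, hp⟩ := hF
  have hr : 0 < p.radius := lt_of_lt_of_le hp.r_pos hp.r_le
  obtain ⟨t, ht0, htr⟩ := ENNReal.lt_iff_exists_nnreal_btwn.mp hr
  have ht0' : (0:ℝ≥0) < t := by exact_mod_cast ht0
  have ht0'' : (0:ℝ) < (t:ℝ) := ht0'
  obtain ⟨C, hC0, hCb⟩ := p.norm_mul_pow_le_of_lt_radius htr
  -- the radius of the shifted series is positive
  have hQrad : 0 < (QQ p).radius := by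
    have hb : ∀ m, ‖QQ p m‖ * ((t/2 : ℝ≥0):ℝ)^m ≤ 2*C/(t:ℝ) := by
      intro m
      have h1 : ‖QQ p m‖ * ((t/2 : ℝ≥0):ℝ)^m ≤ ((m+1) * ‖p (m+1)‖) * ((t:ℝ)/2)^m := by
        have : ((t/2 : ℝ≥0):ℝ) = (t:ℝ)/2 := by push_cast; ring
        rw [this]
        refine mul_le_mul_of_nonneg_right (QQ_norm p m) ?_
        positivity
      refine h1.trans ?_
      have h2 : ((m+1) * ‖p (m+1)‖) * ((t:ℝ)/2)^m
          = ((m+1) / 2^m) * (‖p (m+1)‖ * (t:ℝ)^(m+1)) / (t:ℝ) := by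
        have h2m : ((1:ℝ)/2)^m * 2^m = 1 := by rw [← mul_pow]; norm_num
        field_simp
        linear_combination (‖p (m + 1)‖ * (t:ℝ) * (t:ℝ) ^ m) * h2m
      rw [h2]
      have h3 : ‖p (m+1)‖ * (t:ℝ)^(m+1) ≤ C := hCb (m+1)
      have h4 : ((m:ℝ)+1) / 2^m ≤ 2 := by
        rw [div_le_iff₀ (by positivity)]
        have : (m+1 : ℕ) ≤ 2^(m+1) := (Nat.lt_two_pow_self (n := m+1)).le
        have : ((m+1 : ℕ) : ℝ) ≤ ((2^(m+1) : ℕ) : ℝ) := by exact_mod_cast this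
        push_cast at this
        rw [pow_succ] at this
        linarith
      have h5 : 0 ≤ ‖p (m+1)‖ * (t:ℝ)^(m+1) := by positivity
      have h6 : ((m:ℝ)+1)/2^m * (‖p (m+1)‖ * (t:ℝ)^(m+1)) ≤ 2 * C :=
        mul_le_mul h4 h3 h5 (by norm_num)
      gcongr
    have hle := (QQ p).le_radius_of_bound (2*C/(t:ℝ)) hb
    calc (0 : ℝ≥0∞) < ((t/2 : ℝ≥0) : ℝ≥0∞) := by
          exact_mod_cast half_pos ht0'
      _ ≤ (QQ p).radius := hle
  -- the candidate quotient
  set a : (Fin (n+1) → ℂ) → ℂ := (QQ p).sum with ha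
  have hQ := (QQ p).hasFPowerSeriesOnBall hQrad
  refine ⟨a, ?_, ?_⟩
  · exact Filter.eventually_of_mem (EMetric.ball_mem_nhds _ hQrad)
      (fun y hy => hQ.analyticOnNhd y hy)
  · have hPt : Tendsto (fun x => PP n x) (𝓝 0) (𝓝 (0 : Fin (n+1) → ℂ)) := by
      have := (PP n).continuous.tendsto (0 : Fin (n+1) → ℂ)
      simpa using this
    have hball1 : ∀ᶠ x : Fin (n+1) → ℂ in 𝓝 0, x ∈ Metric.eball (0 : Fin (n+1) → ℂ) r :=
      Filter.eventually_of_mem (EMetric.ball_mem_nhds _ hp.r_pos) (fun y hy => hy)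
    have hball2 : ∀ᶠ x : Fin (n+1) → ℂ in 𝓝 0,
        x ∈ Metric.eball (0 : Fin (n+1) → ℂ) (QQ p).radius :=
      Filter.eventually_of_mem (EMetric.ball_mem_nhds _ hQrad) (fun y hy => hy)
    filter_upwards [hball1, hball2, hPt.eventually h0] with x hx hx2 hPx
    have hFu : F (PP n x) = 0 := hPx (PP_last x)
    have hu : PP n x ∈ Metric.eball (0 : Fin (n+1) → ℂ) r := by
      rw [mem_emetric_ball_zero_iff] at hx ⊢
      refine lt_of_le_of_lt ?_ hx
      exact enorm_le_iff_norm_le.mpr (norm_PP_le x)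
    have hsx : HasSum (fun m => p m (fun _ => x)) (F x) := by
      have := hp.hasSum (y := x) hx
      simpa using this
    have hsu : HasSum (fun m => p m (fun _ => PP n x)) (0 : ℂ) := by
      have := hp.hasSum (y := PP n x) hu
      rw [zero_add, hFu] at this
      exact this
    have h1' := (hasSum_nat_add_iff' (f := fun m => p m (fun _ => x)) 1).mpr hsx
    have h2' := (hasSum_nat_add_iff' (f := fun m => p m (fun _ => PP n x)) 1).mpr hsu
    have hc : (fun _ : Fin 0 => x) = (fun _ : Fin 0 => PP n x) :=
      funext fun k => k.elim0
    have hsub := h1'.sub h2'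
    have hqx : HasSum (fun m => QQ p m (fun _ => x)) (a x) := by
      have := hQ.hasSum (y := x) hx2
      simpa using this
    have hmul := hqx.mul_left (x (Fin.last n))
    have hmul' : HasSum
        (fun m => p (m+1) (fun _ => x) - p (m+1) (fun _ => PP n x))
        (x (Fin.last n) * a x) := by
      refine HasSum.congr_fun hmul ?_
      intro m
      exact (QQ_diag p m x).symm
    have := hsub.unique hmul'
    rw [Finset.sum_range_one, Finset.sum_range_one, hc] at this
    rw [sub_sub_sub_cancel_right] at this
    rw [← this]
    ring

end FoldAux

open FoldAux

/-- `η` is liftable over `f`: there is a map `ξ`, analytic on a neighbourhood of `0`,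
with `df ∘ ξ = η ∘ f` near `0`. -/
def Liftable {E F : Type*} [NormedAddCommGroup E] [NormedSpace ℂ E]
    [NormedAddCommGroup F] [NormedSpace ℂ F] (f : E → F) (η : F → F) : Prop :=
  ∃ ξ : E → E, (∀ᶠ x in 𝓝 0, AnalyticAt ℂ ξ x) ∧
    ∀ᶠ x in 𝓝 0, fderiv ℂ f x (ξ x) = η (f x)

/-- A map `η`, analytic near `0`, is liftable over the fold map
`g(x₁,…,xₙ,x_{n+1}) = (x₁,…,xₙ,x_{n+1}²)` iff its last component vanishes identically
on the hyperplane `{X_{n+1} = 0}` near `0`. -/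
theorem liftable_over_fold_iff
    (n : ℕ) (hn : 1 ≤ n)
    (g : (Fin (n + 1) → ℂ) → (Fin (n + 1) → ℂ))
    (hg : ∀ x, g x = Function.update x (Fin.last n) ((x (Fin.last n)) ^ 2))
    (η : (Fin (n + 1) → ℂ) → (Fin (n + 1) → ℂ))
    (hη : ∀ᶠ X in 𝓝 0, AnalyticAt ℂ η X) :
    Liftable g η ↔
      ∃ U ∈ 𝓝 (0 : Fin (n + 1) → ℂ), ∀ X ∈ U,
        X (Fin.last n) = 0 → η X (Fin.last n) = 0 := by
  have gform : g = fun x => x + (x (Fin.last n) * x (Fin.last n) - x (Fin.last n)) • ev n := by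
    funext x
    rw [hg]
    funext j
    rcases eq_or_ne j (Fin.last n) with rfl | hj
    · simp [ev, Pi.single_apply]
      ring
    · simp [Function.update_of_ne hj, ev, Pi.single_apply, hj]
  -- derivative of the fold map
  have hD : ∀ x : Fin (n+1) → ℂ, HasFDerivAt g
      (ContinuousLinearMap.id ℂ (Fin (n+1) → ℂ) +
        ((2 * x (Fin.last n) - 1) •
          (ContinuousLinearMap.proj (R := ℂ) (φ := fun _ : Fin (n+1) => ℂ)
            (Fin.last n))).smulRight (ev n)) x := by
    intro x
    rw [gform]
    have hc : HasFDerivAt (fun y : Fin (n+1) → ℂ => y (Fin.last n))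
        (ContinuousLinearMap.proj (R := ℂ) (φ := fun _ : Fin (n+1) => ℂ) (Fin.last n)) x :=
      hasFDerivAt_apply (Fin.last n) x
    have h1 := ((hc.mul hc).sub hc).smul (hasFDerivAt_const (ev n) x)
    have h2 := (hasFDerivAt_id x).add h1
    refine h2.congr_fderiv ?_
    ext v j
    simp only [ContinuousLinearMap.add_apply, ContinuousLinearMap.coe_id', id_eq,
      ContinuousLinearMap.smulRight_apply, ContinuousLinearMap.smul_apply,
      ContinuousLinearMap.coe_sub', Pi.sub_apply, ContinuousLinearMap.proj_apply,
      smul_eq_mul, ContinuousLinearMap.zero_apply, smul_zero, zero_add,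
      ContinuousLinearMap.coe_add', Pi.add_apply, Pi.smul_apply]
    ring
  have keyD : ∀ (x v : Fin (n+1) → ℂ),
      fderiv ℂ g x v = v + ((2 * x (Fin.last n) - 1) * v (Fin.last n)) • ev n := by
    intro x v
    rw [(hD x).fderiv]
    simp [ContinuousLinearMap.smulRight_apply]
  constructor
  · rintro ⟨ξ, -, hξ⟩
    refine ⟨{x | fderiv ℂ g x (ξ x) = η (g x)}, hξ, fun X hX hX0 => ?_⟩
    have hgX : g X = X := by
      rw [hg]
      simp [Function.update_eq_self_iff, hX0]
    have h : fderiv ℂ g X (ξ X) = η (g X) := hX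
    rw [hgX] at h
    have h3 := congrFun h (Fin.last n)
    rw [keyD] at h3
    simp only [Pi.add_apply, Pi.smul_apply, smul_eq_mul, hX0] at h3
    rw [← h3, ev, Pi.single_eq_same]
    ring
  · rintro ⟨U, hU, hvan⟩
    have hη0 : AnalyticAt ℂ η 0 := hη.self_of_nhds
    have hproj : ∀ (x : Fin (n+1) → ℂ), AnalyticAt ℂ (fun y : Fin (n+1) → ℂ => y (Fin.last n)) x :=
      fun x => (ContinuousLinearMap.proj (R := ℂ) (φ := fun _ : Fin (n+1) => ℂ)
        (Fin.last n)).analyticAt x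
    have hF : AnalyticAt ℂ (fun X => η X (Fin.last n)) 0 :=
      ((ContinuousLinearMap.proj (R := ℂ) (φ := fun _ : Fin (n+1) => ℂ)
        (Fin.last n)).analyticAt (η 0)).comp hη0
    have h0 : ∀ᶠ X in 𝓝 (0 : Fin (n+1) → ℂ), X (Fin.last n) = 0 → η X (Fin.last n) = 0 :=
      Filter.eventually_of_mem hU hvan
    obtain ⟨a, haA, haEq⟩ := divide n (fun X => η X (Fin.last n)) hF h0
    -- facts about g
    have hgA : ∀ x, AnalyticAt ℂ g x := by
      intro x
      rw [gform]
      exact (analyticAt_id).add ((((hproj x).mul (hproj x)).sub (hproj x)).smul analyticAt_const)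
    have hg0 : g 0 = 0 := by
      rw [hg]
      simp
    have hgt : Tendsto g (𝓝 0) (𝓝 (0 : Fin (n+1) → ℂ)) := by
      have := (hgA 0).continuousAt
      rwa [ContinuousAt, hg0] at this
    refine ⟨fun x => η (g x) +
      (x (Fin.last n) * a (g x) / 2 - η (g x) (Fin.last n)) • ev n, ?_, ?_⟩
    · filter_upwards [hgt.eventually hη, hgt.eventually haA] with x h1 h2
      have hηg : AnalyticAt ℂ (fun y => η (g y)) x := h1.comp (hgA x)
      have hηgl : AnalyticAt ℂ (fun y => η (g y) (Fin.last n)) x := by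
        exact AnalyticAt.comp (g := fun v : Fin (n+1) → ℂ => v (Fin.last n))
          (f := fun y => η (g y))
          ((ContinuousLinearMap.proj (R := ℂ) (φ := fun _ : Fin (n+1) => ℂ)
            (Fin.last n)).analyticAt (η (g x))) hηg
      have hag : AnalyticAt ℂ (fun y => a (g y)) x := h2.comp (hgA x)
      have hscal : AnalyticAt ℂ
          (fun y => y (Fin.last n) * a (g y) / 2 - η (g y) (Fin.last n)) x :=
        (((hproj x).mul hag).div analyticAt_const two_ne_zero).sub hηgl
      exact hηg.add (hscal.smul analyticAt_const)
    · filter_upwards [hgt.eventually haEq] with x hx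
      have hgl : g x (Fin.last n) = x (Fin.last n) * x (Fin.last n) := by
        rw [hg]
        simp
        ring
      have hx' : η (g x) (Fin.last n) = x (Fin.last n) * x (Fin.last n) * a (g x) := by
        rw [hx, hgl]
      rw [keyD]
      funext j
      rcases eq_or_ne j (Fin.last n) with rfl | hj
      · simp only [Pi.add_apply, Pi.smul_apply, smul_eq_mul, ev, Pi.single_eq_same]
        linear_combination -hx'
      · simp [ev, Pi.single_apply, hj]
end
end

section
/- Let l ≥ 1 and let f : ℂ² → ℂ² be the map f(x, z) = (x³ + z^l x, z). Then both of the polynomial vector fields η_1(X, Z) = (3lX, 2Z) and η_2(X, Z) = (−2lZ^{3l−1}, 9X) are liftable over f; explicitly, ξ_1(x, z) = (lx, 2z) satisfies (fderiv ℂ f (x,z))(ξ_1(x,z)) = η_1(f(x,z)) and ξ_2(x, z) = (−3l x² z^{l−1} − 2l z^{2l−1}, 9x³ + 9z^l x) satisfies (fderiv ℂ f (x,z))(ξ_2(x,z)) = η_2(f(x,z)), for all (x,z) ∈ ℂ². -/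
open Filter Topology

lemma hasFDerivAt_aug_cusp (l : ℕ) (x z : ℂ) :
    HasFDerivAt (fun p : ℂ × ℂ => (p.1 ^ 3 + p.2 ^ l * p.1, p.2))
      (((((3 : ℂ) * x ^ 2) • ContinuousLinearMap.fst ℂ ℂ ℂ) +
        (z ^ l • ContinuousLinearMap.fst ℂ ℂ ℂ +
          x • ((l : ℂ) * z ^ (l - 1)) • ContinuousLinearMap.snd ℂ ℂ ℂ)).prod
        (ContinuousLinearMap.snd ℂ ℂ ℂ)) (x, z) := by
  have hx3 : HasFDerivAt (fun p : ℂ × ℂ => p.1 ^ 3)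
      (((3 : ℂ) * x ^ 2) • ContinuousLinearMap.fst ℂ ℂ ℂ) (x, z) := by
    simpa [Function.comp_def] using (hasDerivAt_pow 3 x).comp_hasFDerivAt (x, z)
      (hasFDerivAt_fst : HasFDerivAt Prod.fst (ContinuousLinearMap.fst ℂ ℂ ℂ) (x, z))
  have hzl : HasFDerivAt (fun p : ℂ × ℂ => p.2 ^ l)
      (((l : ℂ) * z ^ (l - 1)) • ContinuousLinearMap.snd ℂ ℂ ℂ) (x, z) :=
    (hasDerivAt_pow l z).comp_hasFDerivAt (x, z) hasFDerivAt_snd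
  exact HasFDerivAt.prodMk (hx3.add (hzl.mul hasFDerivAt_fst)) hasFDerivAt_snd

/-- Example 4.5 i): for the augmentation `f(x,z) = (x³ + zˡx, z)`, the vector fields
`η₁(X,Z) = (3lX, 2Z)` and `η₂(X,Z) = (−2lZ^{3l−1}, 9X)` are liftable over `f`, with the
explicit lifts `ξ₁(x,z) = (lx, 2z)` and
`ξ₂(x,z) = (−3lx²z^{l−1} − 2lz^{2l−1}, 9x³ + 9zˡx)`. -/
theorem lift_of_augmented_cusp
    (l : ℕ) (hl : 1 ≤ l)
    (f : ℂ × ℂ → ℂ × ℂ) (hf : ∀ x z : ℂ, f (x, z) = (x ^ 3 + z ^ l * x, z))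
    (η₁ η₂ : ℂ × ℂ → ℂ × ℂ)
    (hη₁ : ∀ X Z : ℂ, η₁ (X, Z) = (3 * (l : ℂ) * X, 2 * Z))
    (hη₂ : ∀ X Z : ℂ, η₂ (X, Z) = (-2 * (l : ℂ) * Z ^ (3 * l - 1), 9 * X)) :
    (∀ x z : ℂ, fderiv ℂ f (x, z) ((l : ℂ) * x, 2 * z) = η₁ (f (x, z))) ∧
    (∀ x z : ℂ, fderiv ℂ f (x, z)
      (-3 * (l : ℂ) * x ^ 2 * z ^ (l - 1) - 2 * (l : ℂ) * z ^ (2 * l - 1),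
        9 * x ^ 3 + 9 * z ^ l * x) = η₂ (f (x, z))) ∧
    Liftable f η₁ ∧ Liftable f η₂ := by
  obtain ⟨k, rfl⟩ : ∃ k, l = k + 1 := ⟨l - 1, by omega⟩
  have hfe : f = fun p : ℂ × ℂ => (p.1 ^ 3 + p.2 ^ (k + 1) * p.1, p.2) := by
    funext p
    obtain ⟨x, z⟩ := p
    exact hf x z
  have hd : ∀ x z : ℂ, ∀ v : ℂ × ℂ, fderiv ℂ f (x, z) v =
      (3 * x ^ 2 * v.1 + (z ^ (k + 1) * v.1 + x * (((k : ℂ) + 1) * z ^ k * v.2)), v.2) := by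
    intro x z v
    rw [hfe, (hasFDerivAt_aug_cusp (k + 1) x z).fderiv]
    simp [mul_assoc]
  have h2l : 2 * (k + 1) - 1 = 2 * k + 1 := by omega
  have h3l : 3 * (k + 1) - 1 = 3 * k + 2 := by omega
  have key1 : ∀ x z : ℂ, fderiv ℂ f (x, z) (((k : ℂ) + 1) * x, 2 * z) = η₁ (f (x, z)) := by
    intro x z
    rw [hd, hf, hη₁]
    refine Prod.ext ?_ rfl
    push_cast
    ring
  have key2 : ∀ x z : ℂ, fderiv ℂ f (x, z)
      (-3 * ((k : ℂ) + 1) * x ^ 2 * z ^ (k + 1 - 1) -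
        2 * ((k : ℂ) + 1) * z ^ (2 * (k + 1) - 1),
        9 * x ^ 3 + 9 * z ^ (k + 1) * x) = η₂ (f (x, z)) := by
    intro x z
    rw [hd, hf, hη₂]
    simp only [h2l, h3l, Nat.add_sub_cancel, Prod.mk.injEq]
    constructor <;> (push_cast; ring)
  refine ⟨by exact_mod_cast key1, by exact_mod_cast key2, ?_, ?_⟩
  · refine ⟨fun p => (((k : ℂ) + 1) * p.1, 2 * p.2), Eventually.of_forall fun p => ?_,
      Eventually.of_forall fun p => ?_⟩
    · exact ((analyticAt_const.mul analyticAt_fst).prod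
        (analyticAt_const.mul analyticAt_snd))
    · obtain ⟨x, z⟩ := p
      exact key1 x z
  · refine ⟨fun p => (-3 * ((k : ℂ) + 1) * p.1 ^ 2 * p.2 ^ (k + 1 - 1) -
        2 * ((k : ℂ) + 1) * p.2 ^ (2 * (k + 1) - 1),
        9 * p.1 ^ 3 + 9 * p.2 ^ (k + 1) * p.1), Eventually.of_forall fun p => ?_,
      Eventually.of_forall fun p => ?_⟩
    · exact (((analyticAt_const.mul (analyticAt_fst.pow 2)).mul (analyticAt_snd.pow _)).sub
        (analyticAt_const.mul (analyticAt_snd.pow _))).prod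
        ((analyticAt_const.mul (analyticAt_fst.pow 3)).add
          ((analyticAt_const.mul (analyticAt_snd.pow _)).mul analyticAt_fst))
    · obtain ⟨x, z⟩ := p
      exact key2 x z
end

section
/- Let l, m ≥ 1 and let F : ℂ³ → ℂ³ be the map F(x, y, z) = (x³ + y^l x + z^m x, y, z). The critical set of F is Σ = {(x, y, z) ∈ ℂ³ : 3x² + y^l + z^m = 0} (the vanishing locus of the Jacobian determinant of F), and the discriminant of F, i.e. the image F(Σ), is exactly the set {(X, Y, Z) ∈ ℂ³ : 27X² + 4(Y^l + Z^m)³ = 0}. -/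
/-- Example 4.5 ii): for `F(x,y,z) = (x³ + yˡx + zᵐx, y, z)`, the critical set of `F` is
`{3x² + yˡ + zᵐ = 0}` and the discriminant of `F` (the image of the critical set) is
exactly `{27X² + 4(Yˡ + Zᵐ)³ = 0}`. -/
theorem discriminant_of_augmentation
    (l m : ℕ) (hl : 1 ≤ l) (hm : 1 ≤ m)
    (F : ℂ × ℂ × ℂ → ℂ × ℂ × ℂ)
    (hF : ∀ x y z : ℂ, F (x, y, z) = (x ^ 3 + y ^ l * x + z ^ m * x, y, z)) :
    {p : ℂ × ℂ × ℂ | ¬ Function.Bijective ⇑(fderiv ℂ F p)} =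
      {p : ℂ × ℂ × ℂ | 3 * p.1 ^ 2 + p.2.1 ^ l + p.2.2 ^ m = 0} ∧
    F '' {p : ℂ × ℂ × ℂ | 3 * p.1 ^ 2 + p.2.1 ^ l + p.2.2 ^ m = 0} =
      {q : ℂ × ℂ × ℂ | 27 * q.1 ^ 2 + 4 * (q.2.1 ^ l + q.2.2 ^ m) ^ 3 = 0} := by
  have hF' : F = fun p : ℂ × ℂ × ℂ =>
      (p.1 ^ 3 + p.2.1 ^ l * p.1 + p.2.2 ^ m * p.1, p.2.1, p.2.2) :=
    funext fun p => hF p.1 p.2.1 p.2.2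
  subst hF'
  constructor
  · ext p
    obtain ⟨x, y, z⟩ := p
    simp only [Set.mem_setOf_eq]
    -- basic derivatives
    have h1 : HasFDerivAt (fun q : ℂ × ℂ × ℂ => q.1)
        (ContinuousLinearMap.fst ℂ ℂ (ℂ × ℂ)) (x, y, z) := hasFDerivAt_fst
    have h2 : HasFDerivAt (fun q : ℂ × ℂ × ℂ => q.2.1)
        ((ContinuousLinearMap.fst ℂ ℂ ℂ).comp (ContinuousLinearMap.snd ℂ ℂ (ℂ × ℂ)))
        (x, y, z) := hasFDerivAt_fst.comp _ hasFDerivAt_snd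
    have h3 : HasFDerivAt (fun q : ℂ × ℂ × ℂ => q.2.2)
        ((ContinuousLinearMap.snd ℂ ℂ ℂ).comp (ContinuousLinearMap.snd ℂ ℂ (ℂ × ℂ)))
        (x, y, z) := hasFDerivAt_snd.comp _ hasFDerivAt_snd
    have hf1 : HasFDerivAt (fun q : ℂ × ℂ × ℂ => q.1 ^ 3)
        ((((3 : ℕ) : ℂ) * x ^ (3 - 1)) • ContinuousLinearMap.fst ℂ ℂ (ℂ × ℂ)) (x, y, z) :=
      by have := (hasDerivAt_pow 3 x).comp_hasFDerivAt (x, y, z) h1; exact this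
    have hf2 : HasFDerivAt (fun q : ℂ × ℂ × ℂ => q.2.1 ^ l) _ (x, y, z) :=
      (hasDerivAt_pow l y).comp_hasFDerivAt _ h2
    have hf3 : HasFDerivAt (fun q : ℂ × ℂ × ℂ => q.2.2 ^ m) _ (x, y, z) :=
      (hasDerivAt_pow m z).comp_hasFDerivAt _ h3
    have hD : HasFDerivAt
        (fun p : ℂ × ℂ × ℂ =>
          (p.1 ^ 3 + p.2.1 ^ l * p.1 + p.2.2 ^ m * p.1, p.2.1, p.2.2))
        _ (x, y, z) := HasFDerivAt.prodMk ((hf1.add (hf2.mul h1)).add (hf3.mul h1)) (HasFDerivAt.prodMk h2 h3)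
    rw [hD.fderiv]
    set L := ((((3 : ℕ) * x ^ (3 - 1)) • ContinuousLinearMap.fst ℂ ℂ (ℂ × ℂ) +
        (y ^ l • ContinuousLinearMap.fst ℂ ℂ (ℂ × ℂ) +
          x • ((l : ℂ) * y ^ (l - 1)) •
            ((ContinuousLinearMap.fst ℂ ℂ ℂ).comp (ContinuousLinearMap.snd ℂ ℂ (ℂ × ℂ)))) +
        (z ^ m • ContinuousLinearMap.fst ℂ ℂ (ℂ × ℂ) +
          x • ((m : ℂ) * z ^ (m - 1)) •
            ((ContinuousLinearMap.snd ℂ ℂ ℂ).comp (ContinuousLinearMap.snd ℂ ℂ (ℂ × ℂ)))))).prod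
        (((ContinuousLinearMap.fst ℂ ℂ ℂ).comp (ContinuousLinearMap.snd ℂ ℂ (ℂ × ℂ))).prod
          ((ContinuousLinearMap.snd ℂ ℂ ℂ).comp (ContinuousLinearMap.snd ℂ ℂ (ℂ × ℂ)))) with hL
    have happ : ∀ u v w : ℂ, L (u, v, w) =
        ((3 * x ^ 2 + y ^ l + z ^ m) * u +
          (x * ((l : ℂ) * y ^ (l - 1))) * v + (x * ((m : ℂ) * z ^ (m - 1))) * w, v, w) := by
      intro u v w
      simp [hL, ContinuousLinearMap.prod_apply, ContinuousLinearMap.add_apply,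
        ContinuousLinearMap.smul_apply, ContinuousLinearMap.comp_apply]
      ring
    constructor
    · intro hnb
      by_contra ha
      apply hnb
      have hinj : Function.Injective ⇑L := by
        intro q q' hqq'
        obtain ⟨u, v, w⟩ := q
        obtain ⟨u', v', w'⟩ := q'
        rw [happ, happ] at hqq'
        simp only [Prod.mk.injEq] at hqq'
        obtain ⟨e1, e2, e3⟩ := hqq'
        subst e2; subst e3
        have : (3 * x ^ 2 + y ^ l + z ^ m) * u = (3 * x ^ 2 + y ^ l + z ^ m) * u' := by
          linear_combination e1
        have := mul_left_cancel₀ ha this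
        subst this
        rfl
      refine ⟨hinj, ?_⟩
      have hinj' : Function.Injective ⇑(L : ℂ × ℂ × ℂ →ₗ[ℂ] ℂ × ℂ × ℂ) := hinj
      have hsurj := LinearMap.injective_iff_surjective.mp hinj'
      exact hsurj
    · intro ha hbij
      have h0 : L (1, 0, 0) = L (0, 0, 0) := by
        rw [happ, happ, ha]
        norm_num
      have := hbij.injective h0
      simp at this
  · ext q
    obtain ⟨X, Y, Z⟩ := q
    simp only [Set.mem_image, Set.mem_setOf_eq]
    constructor
    · rintro ⟨⟨x, y, z⟩, hxyz, hFeq⟩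
      simp only [Set.mem_setOf_eq] at hxyz
      simp only [Prod.mk.injEq] at hFeq
      obtain ⟨e1, e2, e3⟩ := hFeq
      subst e1; subst e2; subst e3
      linear_combination ((3 * x ^ 2 + y ^ l + z ^ m) *
        (4 * (3 * x ^ 2 + y ^ l + z ^ m) - 9 * x ^ 2)) * hxyz
    · intro h
      obtain ⟨t, ht⟩ := IsAlgClosed.exists_pow_nat_eq (-(Y ^ l + Z ^ m) / 3) (n := 2)
        (by norm_num)
      have hs : 3 * t ^ 2 + (Y ^ l + Z ^ m) = 0 := by
        rw [ht]; ring
      have hX2 : (X - 2 * t ^ 3) * (X + 2 * t ^ 3) = 0 := by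
        linear_combination (1 / 27) * h - ((4 / 27) * ((Y ^ l + Z ^ m) ^ 2 -
          (Y ^ l + Z ^ m) * (3 * t ^ 2) + 9 * t ^ 4)) * hs
      rcases mul_eq_zero.mp hX2 with hc | hc
      · refine ⟨(-t, Y, Z), ?_, ?_⟩
        · simp only [Set.mem_setOf_eq]
          linear_combination hs
        · rw [Prod.mk.injEq]
          exact ⟨by linear_combination (-1 : ℂ) * hc + (-t) * hs, rfl⟩
      · refine ⟨(t, Y, Z), ?_, ?_⟩
        · simp only [Set.mem_setOf_eq]
          linear_combination hs
        · rw [Prod.mk.injEq]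
          exact ⟨by linear_combination (-1 : ℂ) * hc + t * hs, rfl⟩
end

section
/- Let l ≥ 1 and let F_l : ℂ³ → ℂ³ be the map F_l(x, y, z) = (x³ + y^l x + zx, y, z). Then each of the three polynomial vector fields η_1(X, Y, Z) = (3lX, 2Y, 2lZ), η_2(X, Y, Z) = (0, 1, −lY^{l−1}), and η_3(X, Y, Z) = (2(Z + Y^l)², 0, −9X) is liftable over F_l; explicit lifts are ξ_1(x,y,z) = (lx, 2y, 2lz), ξ_2(x,y,z) = (0, 1, −ly^{l−1}), and ξ_3(x,y,z) = (3x² + 2(y^l + z), 0, −9(x³ + y^l x + zx)). -/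
open Filter Topology

/-- Example 4.11 ii): for `F_l(x,y,z) = (x³ + yˡx + zx, y, z)`, the vector fields
`η₁(X,Y,Z) = (3lX, 2Y, 2lZ)`, `η₂(X,Y,Z) = (0, 1, −lY^{l−1})` and
`η₃(X,Y,Z) = (2(Z+Yˡ)², 0, −9X)` are liftable over `F_l`, with the explicit lifts
`ξ₁ = (lx, 2y, 2lz)`, `ξ₂ = (0, 1, −ly^{l−1})`,
`ξ₃ = (3x² + 2(yˡ+z), 0, −9(x³ + yˡx + zx))`. -/
theorem lift_of_two_parameter_unfolding_of_cusp
    (l : ℕ) (hl : 1 ≤ l)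
    (F : ℂ × ℂ × ℂ → ℂ × ℂ × ℂ)
    (hF : ∀ x y z : ℂ, F (x, y, z) = (x ^ 3 + y ^ l * x + z * x, y, z))
    (η₁ η₂ η₃ : ℂ × ℂ × ℂ → ℂ × ℂ × ℂ)
    (hη₁ : ∀ X Y Z : ℂ, η₁ (X, Y, Z) = (3 * (l : ℂ) * X, 2 * Y, 2 * (l : ℂ) * Z))
    (hη₂ : ∀ X Y Z : ℂ, η₂ (X, Y, Z) = (0, 1, -(l : ℂ) * Y ^ (l - 1)))
    (hη₃ : ∀ X Y Z : ℂ, η₃ (X, Y, Z) = (2 * (Z + Y ^ l) ^ 2, 0, -9 * X)) :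
    (∀ x y z : ℂ, fderiv ℂ F (x, y, z) ((l : ℂ) * x, 2 * y, 2 * (l : ℂ) * z)
      = η₁ (F (x, y, z))) ∧
    (∀ x y z : ℂ, fderiv ℂ F (x, y, z) (0, 1, -(l : ℂ) * y ^ (l - 1))
      = η₂ (F (x, y, z))) ∧
    (∀ x y z : ℂ, fderiv ℂ F (x, y, z)
      (3 * x ^ 2 + 2 * (y ^ l + z), 0, -9 * (x ^ 3 + y ^ l * x + z * x))
      = η₃ (F (x, y, z))) ∧
    Liftable F η₁ ∧ Liftable F η₂ ∧ Liftable F η₃ := by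
  obtain ⟨m, rfl⟩ : ∃ m, l = m + 1 := ⟨l - 1, (Nat.succ_pred_eq_of_pos hl).symm⟩
  clear hl
  have hFeq : F = fun p : ℂ × ℂ × ℂ =>
      (p.1 ^ 3 + p.2.1 ^ (m + 1) * p.1 + p.2.2 * p.1, p.2.1, p.2.2) := by
    funext p
    obtain ⟨x, y, z⟩ := p
    exact hF x y z
  have key : ∀ x y z a b c : ℂ, fderiv ℂ F (x, y, z) (a, b, c) =
      ((3 * x ^ 2 + y ^ (m + 1) + z) * a + ((m + 1 : ℂ) * y ^ m * x) * b + x * c, b, c) := by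
    intro x y z a b c
    have h1 : HasFDerivAt (fun p : ℂ × ℂ × ℂ => p.1)
        (ContinuousLinearMap.fst ℂ ℂ (ℂ × ℂ)) (x, y, z) := hasFDerivAt_fst
    have h2 : HasFDerivAt (fun p : ℂ × ℂ × ℂ => p.2.1)
        ((ContinuousLinearMap.fst ℂ ℂ ℂ).comp (ContinuousLinearMap.snd ℂ ℂ (ℂ × ℂ)))
        (x, y, z) := hasFDerivAt_fst.comp _ hasFDerivAt_snd
    have h3 : HasFDerivAt (fun p : ℂ × ℂ × ℂ => p.2.2)
        ((ContinuousLinearMap.snd ℂ ℂ ℂ).comp (ContinuousLinearMap.snd ℂ ℂ (ℂ × ℂ)))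
        (x, y, z) := hasFDerivAt_snd.comp _ hasFDerivAt_snd
    have h1p : HasFDerivAt (fun p : ℂ × ℂ × ℂ => p.1 ^ 3)
        ((3 * x ^ 2) • ContinuousLinearMap.fst ℂ ℂ (ℂ × ℂ)) (x, y, z) := by
      have := (hasDerivAt_pow 3 x).comp_hasFDerivAt (x, y, z) h1
      simpa [Function.comp_def] using this
    have h2p : HasFDerivAt (fun p : ℂ × ℂ × ℂ => p.2.1 ^ (m + 1))
        (((m + 1 : ℂ) * y ^ m) • ((ContinuousLinearMap.fst ℂ ℂ ℂ).comp
          (ContinuousLinearMap.snd ℂ ℂ (ℂ × ℂ)))) (x, y, z) := by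
      have := (hasDerivAt_pow (m + 1) y).comp_hasFDerivAt (x, y, z) h2
      simpa [Function.comp_def] using this
    have hd := HasFDerivAt.prodMk ((h1p.add ((h2p.mul h1))).add (h3.mul h1)) (h2.prodMk h3)
    rw [hFeq, HasFDerivAt.fderiv (f := fun p : ℂ × ℂ × ℂ =>
      (p.1 ^ 3 + p.2.1 ^ (m + 1) * p.1 + p.2.2 * p.1, p.2.1, p.2.2)) hd]
    simp [ContinuousLinearMap.prod_apply, ContinuousLinearMap.add_apply,
      ContinuousLinearMap.smul_apply, ContinuousLinearMap.comp_apply]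
    ring_nf
  have hana : ∀ ξ : ℂ × ℂ × ℂ → ℂ × ℂ × ℂ,
      (∀ p : ℂ × ℂ × ℂ, AnalyticAt ℂ ξ p) → (∀ᶠ p in 𝓝 (0 : ℂ × ℂ × ℂ), AnalyticAt ℂ ξ p) :=
    fun ξ h => Filter.Eventually.of_forall h
  have e1 : ∀ x y z : ℂ, fderiv ℂ F (x, y, z) (((m + 1 : ℕ) : ℂ) * x, 2 * y,
      2 * ((m + 1 : ℕ) : ℂ) * z) = η₁ (F (x, y, z)) := by
    intro x y z
    rw [key, hF, hη₁]
    refine Prod.ext ?_ (Prod.ext rfl rfl)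
    push_cast
    ring
  have e2 : ∀ x y z : ℂ, fderiv ℂ F (x, y, z) (0, 1, -((m + 1 : ℕ) : ℂ) * y ^ (m + 1 - 1))
      = η₂ (F (x, y, z)) := by
    intro x y z
    rw [key, hF, hη₂]
    refine Prod.ext ?_ (Prod.ext rfl rfl)
    simp
    ring
  have e3 : ∀ x y z : ℂ, fderiv ℂ F (x, y, z)
      (3 * x ^ 2 + 2 * (y ^ (m + 1) + z), 0, -9 * (x ^ 3 + y ^ (m + 1) * x + z * x))
      = η₃ (F (x, y, z)) := by
    intro x y z
    rw [key, hF, hη₃]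
    refine Prod.ext ?_ (Prod.ext rfl rfl)
    push_cast
    ring
  refine ⟨e1, e2, e3, ?_, ?_, ?_⟩
  · refine ⟨fun p => (((m + 1 : ℕ) : ℂ) * p.1, 2 * p.2.1, 2 * ((m + 1 : ℕ) : ℂ) * p.2.2),
      hana _ fun p => ?_, Filter.Eventually.of_forall fun p => ?_⟩
    · exact ((analyticAt_const.mul analyticAt_fst).prod
        ((analyticAt_const.mul (analyticAt_fst.comp analyticAt_snd)).prod
          (analyticAt_const.mul (analyticAt_snd.comp analyticAt_snd))))
    · obtain ⟨x, y, z⟩ := p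
      exact e1 x y z
  · refine ⟨fun p => (0, 1, -((m + 1 : ℕ) : ℂ) * p.2.1 ^ (m + 1 - 1)),
      hana _ fun p => ?_, Filter.Eventually.of_forall fun p => ?_⟩
    · exact (analyticAt_const.prod (analyticAt_const.prod
        (analyticAt_const.mul ((analyticAt_fst.comp analyticAt_snd).pow _))))
    · obtain ⟨x, y, z⟩ := p
      exact e2 x y z
  · refine ⟨fun p => (3 * p.1 ^ 2 + 2 * (p.2.1 ^ (m + 1) + p.2.2), 0,
      -9 * (p.1 ^ 3 + p.2.1 ^ (m + 1) * p.1 + p.2.2 * p.1)),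
      hana _ fun p => ?_, Filter.Eventually.of_forall fun p => ?_⟩
    · exact (((analyticAt_const.mul (analyticAt_fst.pow 2)).add
        (analyticAt_const.mul (((analyticAt_fst.comp analyticAt_snd).pow _).add
          (analyticAt_snd.comp analyticAt_snd)))).prod
        (analyticAt_const.prod (analyticAt_const.mul
          (((analyticAt_fst.pow 3).add
            (((analyticAt_fst.comp analyticAt_snd).pow _).mul analyticAt_fst)).add
            ((analyticAt_snd.comp analyticAt_snd).mul analyticAt_fst)))))
    · obtain ⟨x, y, z⟩ := p
      exact e3 x y z
end

section
/- Let F : ℂ³ → ℂ³ be the map F(x, y, z) = (x⁴ + yx² + y²x + zx, y, z). Then the polynomial vector field η(X, Y, Z) = (4X, 2Y, 3Z − Y²) is liftable over F; an explicit lift is ξ(x, y, z) = (x, 2y, 3z − y²), i.e. (fderiv ℂ F (x,y,z))(ξ(x,y,z)) = η(F(x,y,z)) for all (x, y, z) ∈ ℂ³. -/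
open Filter Topology

lemma Feq (F : ℂ × ℂ × ℂ → ℂ × ℂ × ℂ)
    (hF : ∀ x y z : ℂ,
      F (x, y, z) = (x ^ 4 + y * x ^ 2 + y ^ 2 * x + z * x, y, z)) :
    F = fun p => (p.1 ^ 4 + p.2.1 * p.1 ^ 2 + p.2.1 ^ 2 * p.1 + p.2.2 * p.1, p.2.1, p.2.2) := by
  funext p
  obtain ⟨x, y, z⟩ := p
  exact hF x y z

lemma keyDeriv (x y z : ℂ) :
    HasFDerivAt (fun p : ℂ × ℂ × ℂ =>
      ((p.1 ^ 4 + p.2.1 * p.1 ^ 2 + p.2.1 ^ 2 * p.1 + p.2.2 * p.1, p.2.1, p.2.2) : ℂ × ℂ × ℂ))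
      ((((4 * x ^ 3 + y * (2 * x) + y ^ 2 + z) • ContinuousLinearMap.fst ℂ ℂ (ℂ × ℂ)
          + (x ^ 2 + 2 * y * x) • ((ContinuousLinearMap.fst ℂ ℂ ℂ).comp (ContinuousLinearMap.snd ℂ ℂ (ℂ × ℂ)))
          + x • ((ContinuousLinearMap.snd ℂ ℂ ℂ).comp (ContinuousLinearMap.snd ℂ ℂ (ℂ × ℂ)))).prod
        (((ContinuousLinearMap.fst ℂ ℂ ℂ).comp (ContinuousLinearMap.snd ℂ ℂ (ℂ × ℂ))).prod
          ((ContinuousLinearMap.snd ℂ ℂ ℂ).comp (ContinuousLinearMap.snd ℂ ℂ (ℂ × ℂ))))) :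
         ℂ × ℂ × ℂ →L[ℂ] ℂ × ℂ × ℂ) (x, y, z) := by
  have hx : HasFDerivAt (fun p : ℂ × ℂ × ℂ => p.1)
      (ContinuousLinearMap.fst ℂ ℂ (ℂ × ℂ)) (x, y, z) := hasFDerivAt_fst
  have hy : HasFDerivAt (fun p : ℂ × ℂ × ℂ => p.2.1)
      ((ContinuousLinearMap.fst ℂ ℂ ℂ).comp (ContinuousLinearMap.snd ℂ ℂ (ℂ × ℂ))) (x, y, z) :=
    hasFDerivAt_snd.fst
  have hz : HasFDerivAt (fun p : ℂ × ℂ × ℂ => p.2.2)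
      ((ContinuousLinearMap.snd ℂ ℂ ℂ).comp (ContinuousLinearMap.snd ℂ ℂ (ℂ × ℂ))) (x, y, z) :=
    hasFDerivAt_snd.snd
  have hx4 := (hasDerivAt_pow 4 x).comp_hasFDerivAt (x, y, z) hx
  have hx2 := (hasDerivAt_pow 2 x).comp_hasFDerivAt (x, y, z) hx
  have hy2 := (hasDerivAt_pow 2 y).comp_hasFDerivAt (x, y, z) hy
  have hg := ((hx4.add (hy.mul hx2)).add (hy2.mul hx)).add (hz.mul hx)
  have := hg.prodMk (hy.prodMk hz)
  refine this.congr_fderiv ?_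
  ext v <;>
    simp [ContinuousLinearMap.smul_apply, ContinuousLinearMap.add_apply, smul_eq_mul] <;> ring

/-- Example 4.11 i): for `F(x,y,z) = (x⁴ + yx² + y²x + zx, y, z)`, the Euler-type vector
field `η(X,Y,Z) = (4X, 2Y, 3Z − Y²)` is liftable over `F`, with the explicit lift
`ξ(x,y,z) = (x, 2y, 3z − y²)`. -/
theorem euler_field_liftable
    (F : ℂ × ℂ × ℂ → ℂ × ℂ × ℂ)
    (hF : ∀ x y z : ℂ,
      F (x, y, z) = (x ^ 4 + y * x ^ 2 + y ^ 2 * x + z * x, y, z))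
    (η : ℂ × ℂ × ℂ → ℂ × ℂ × ℂ)
    (hη : ∀ X Y Z : ℂ, η (X, Y, Z) = (4 * X, 2 * Y, 3 * Z - Y ^ 2)) :
    (∀ x y z : ℂ,
      fderiv ℂ F (x, y, z) (x, 2 * y, 3 * z - y ^ 2) = η (F (x, y, z))) ∧
    Liftable F η := by
  have hmain : ∀ x y z : ℂ,
      fderiv ℂ F (x, y, z) (x, 2 * y, 3 * z - y ^ 2) = η (F (x, y, z)) := by
    intro x y z
    rw [Feq F hF, (keyDeriv x y z).fderiv]
    simp only [hη]
    refine Prod.ext ?_ (Prod.ext ?_ ?_) <;>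
      simp only [ContinuousLinearMap.prod_apply, ContinuousLinearMap.add_apply,
        ContinuousLinearMap.smul_apply, ContinuousLinearMap.coe_comp', Function.comp_apply,
        ContinuousLinearMap.coe_fst', ContinuousLinearMap.coe_snd', smul_eq_mul] <;>
      ring
  refine ⟨hmain, ⟨fun p => (p.1, 2 * p.2.1, 3 * p.2.2 - p.2.1 ^ 2), ?_, ?_⟩⟩
  · refine Eventually.of_forall fun p => ?_
    have h1 : AnalyticAt ℂ (fun q : ℂ × ℂ × ℂ => q.1) p :=
      (ContinuousLinearMap.fst ℂ ℂ (ℂ × ℂ)).analyticAt p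
    have h2 : AnalyticAt ℂ (fun q : ℂ × ℂ × ℂ => q.2.1) p :=
      ((ContinuousLinearMap.fst ℂ ℂ ℂ).comp (ContinuousLinearMap.snd ℂ ℂ (ℂ × ℂ))).analyticAt p
    have h3 : AnalyticAt ℂ (fun q : ℂ × ℂ × ℂ => q.2.2) p :=
      ((ContinuousLinearMap.snd ℂ ℂ ℂ).comp (ContinuousLinearMap.snd ℂ ℂ (ℂ × ℂ))).analyticAt p
    exact h1.prod ((analyticAt_const.mul h2).prod
      ((analyticAt_const.mul h3).sub (h2.pow 2)))
  · exact Eventually.of_forall fun p => hmain p.1 p.2.1 p.2.2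
end
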